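/- Let P₁, …, P_c ∈ ℝ[x₁,…,x_n] with 1 ≤ c ≤ n, and let Z = {x ∈ ℝ^n : P₁(x)=⋯=P_c(x)=0}. Fix ρ, R > 0 and set U = {x ∈ Z : |x| < R and max_τ |Δ_τ(x)| ≥ ρ}, where Δ_τ ranges over the determinants of all c×c minors of the Jacobian matrix D(P₁,…,P_c). For α = (α₁,…,α_c) ∈ ℝ^c let V_α = {x : P₁(x)+α₁ = ⋯ = P_c(x)+α_c = 0}. Then for every ε > 0 there exists δ > 0 such that |α| < δ implies: for every x ∈ U there exists y ∈ V_α with |x - y| < ε. -/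

import Mathlib

open MvPolynomial

/-- Strict derivative of evaluation of a multivariate polynomial on Euclidean space. -/
theorem hasStrictFDerivAt_mvpoly_eval {n : ℕ} (p : MvPolynomial (Fin n) ℝ)
    (x : EuclideanSpace ℝ (Fin n)) :
    HasStrictFDerivAt (fun y : EuclideanSpace ℝ (Fin n) => eval (fun i => y i) p)
      (∑ i, eval (fun i' => x i') (pderiv i p) •
        (PiLp.proj 2 (fun _ : Fin n => ℝ) i : EuclideanSpace ℝ (Fin n) →L[ℝ] ℝ)) x := by
  induction p using MvPolynomial.induction_on with
  | C a =>
      have h0 : (∑ i, eval (fun i' => x i') (pderiv i (C a : MvPolynomial (Fin n) ℝ)) •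
          (PiLp.proj 2 (fun _ : Fin n => ℝ) i : EuclideanSpace ℝ (Fin n) →L[ℝ] ℝ)) = 0 := by
        simp [pderiv_C]
      rw [h0]
      simpa using hasStrictFDerivAt_const (a : ℝ) x
  | add p q hp hq =>
      simp only [map_add, add_smul, Finset.sum_add_distrib]
      exact hp.add hq
  | mul_X p j hp =>
      have hj : HasStrictFDerivAt (fun y : EuclideanSpace ℝ (Fin n) => y j)
          (PiLp.proj 2 (fun _ : Fin n => ℝ) j : EuclideanSpace ℝ (Fin n) →L[ℝ] ℝ) x :=
        (PiLp.proj 2 (fun _ : Fin n => ℝ) j :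
          EuclideanSpace ℝ (Fin n) →L[ℝ] ℝ).hasStrictFDerivAt
      have h := hp.mul hj
      have hfun : (fun y : EuclideanSpace ℝ (Fin n) => eval (fun i => y i) (p * X j))
          = fun y : EuclideanSpace ℝ (Fin n) => eval (fun i => y i) p * y j := by
        funext y; simp
      rw [hfun]
      refine h.congr_fderiv (Eq.symm (ContinuousLinearMap.ext fun v => ?_))
      have key : ∀ i : Fin n,
          eval (fun i' => x i') (pderiv i (X j : MvPolynomial (Fin n) ℝ))
            = if i = j then 1 else 0 := by
        intro i
        rcases eq_or_ne i j with h' | h'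
        · subst h'; simp [pderiv_X_self]
        · simp [pderiv_X_of_ne (Ne.symm h'), h']
      simp only [ContinuousLinearMap.coe_sum', Finset.sum_apply,
        ContinuousLinearMap.coe_smul', Pi.smul_apply, PiLp.proj_apply, smul_eq_mul,
        pderiv_mul, map_add, map_mul, eval_X, ContinuousLinearMap.add_apply,
        ContinuousLinearMap.coe_smul', key]
      rw [Finset.sum_congr rfl (fun i _ => by split_ifs <;> ring :
        ∀ i ∈ Finset.univ, ((eval (fun i' => x i') (pderiv i p)) * x j
            + eval (fun i' => x i') p * (if i = j then 1 else 0)) * v i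
          = x j * ((eval (fun i' => x i') (pderiv i p)) * v i)
            + (if i = j then eval (fun i' => x i') p * v i else 0))]
      rw [Finset.sum_add_distrib, ← Finset.mul_sum, Finset.sum_ite_eq' Finset.univ j]
      simp [add_comm]

open Matrix in
theorem hasStrictFDerivAt_mvpoly_F {n c : ℕ} (P : Fin c → MvPolynomial (Fin n) ℝ)
    (x : EuclideanSpace ℝ (Fin n)) :
    HasStrictFDerivAt
      (fun y : EuclideanSpace ℝ (Fin n) =>
        ((WithLp.equiv 2 (Fin c → ℝ)).symm (fun j => eval (fun i => y i) (P j)) :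
          EuclideanSpace ℝ (Fin c)))
      (LinearMap.toContinuousLinearMap
        (Matrix.toEuclideanLin
          (Matrix.of fun j i => eval (fun i' => x i') (pderiv i (P j))))) x := by
  rw [hasStrictFDerivAt_euclidean]
  intro j
  have h1 := hasStrictFDerivAt_mvpoly_eval (P j) x
  have hfun : (fun y : EuclideanSpace ℝ (Fin n) =>
      ((WithLp.equiv 2 (Fin c → ℝ)).symm (fun j => eval (fun i => y i) (P j)) :
        EuclideanSpace ℝ (Fin c)) j)
      = fun y : EuclideanSpace ℝ (Fin n) => eval (fun i => y i) (P j) := by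
    funext y; simp [WithLp.equiv_symm_apply]
  rw [hfun]
  refine h1.congr_fderiv (ContinuousLinearMap.ext fun v => ?_)
  simp [Matrix.ofLp_toEuclideanLin_apply, Matrix.toEuclideanLin_apply, WithLp.equiv_symm_apply,
    Matrix.mulVec, dotProduct, mul_comm]

open Matrix in
theorem mvpoly_F_range_top {n c : ℕ} (P : Fin c → MvPolynomial (Fin n) ℝ)
    (x : EuclideanSpace ℝ (Fin n)) (τ : Fin c ↪ Fin n)
    (hdet : (Matrix.of fun j i => eval (fun i' => x i') (pderiv (τ i) (P j))).det ≠ 0) :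
    LinearMap.range ((LinearMap.toContinuousLinearMap
      (Matrix.toEuclideanLin
        (Matrix.of fun j i => eval (fun i' => x i') (pderiv i (P j))))) :
          EuclideanSpace ℝ (Fin n) →ₗ[ℝ] EuclideanSpace ℝ (Fin c)) = ⊤ := by
  rw [LinearMap.range_eq_top]
  intro w
  set A : Matrix (Fin c) (Fin n) ℝ :=
    Matrix.of fun j i => eval (fun i' => x i') (pderiv i (P j)) with hA
  set B : Matrix (Fin c) (Fin c) ℝ :=
    Matrix.of fun j i => eval (fun i' => x i') (pderiv (τ i) (P j)) with hBdef
  have hB : IsUnit B.det := isUnit_iff_ne_zero.2 hdet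
  set u : Fin c → ℝ := B⁻¹ *ᵥ (WithLp.equiv 2 (Fin c → ℝ) w) with hu
  set v : Fin n → ℝ := fun i' => ∑ i, if i' = τ i then u i else 0 with hv
  refine ⟨(WithLp.equiv 2 (Fin n → ℝ)).symm v, ?_⟩
  have hAv : A *ᵥ v = B *ᵥ u := by
    funext j
    simp only [Matrix.mulVec, dotProduct, hv, Finset.mul_sum, mul_ite, mul_zero]
    rw [Finset.sum_comm]
    refine Finset.sum_congr rfl fun i _ => ?_
    simp [hA, hBdef]
  have hBu : B *ᵥ u = WithLp.equiv 2 (Fin c → ℝ) w := by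
    rw [hu, Matrix.mulVec_mulVec, Matrix.mul_nonsing_inv _ hB, Matrix.one_mulVec]
  simp only [LinearMap.coe_toContinuousLinearMap',
    WithLp.equiv_symm_apply, Matrix.toEuclideanLin_apply_piLp_toLp, hAv, hBu]
  show Matrix.toEuclideanLin A (WithLp.toLp 2 v) = w
  rw [Matrix.toEuclideanLin_apply_piLp_toLp, hAv, hBu]
  rfl

/-- continuity of nonsingular zero sets under constant perturbations
(Lemma 4.2 of the paper, the `V_α` half).  On the part `U` of the common zero set
`Z = Z(P₁,…,P_c)` inside `{|x| < R}` where some `c×c` Jacobian minor has absolute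
determinant at least `ρ`, for every `ε > 0` there is `δ > 0` such that whenever
`|α| < δ`, every point of `U` lies within `ε` of the perturbed variety
`V_α = Z(P₁+α₁, …, P_c+α_c)`. -/
theorem perturbed_variety_approximation
    (n c : ℕ) (hc1 : 1 ≤ c) (hcn : c ≤ n)
    (P : Fin c → MvPolynomial (Fin n) ℝ) (ρ R : ℝ) (hρ : 0 < ρ) (hR : 0 < R) :
    ∀ ε : ℝ, 0 < ε → ∃ δ : ℝ, 0 < δ ∧
      ∀ α : EuclideanSpace ℝ (Fin c), ‖α‖ < δ →
        ∀ x : EuclideanSpace ℝ (Fin n),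
          (∀ j, eval (fun i => x i) (P j) = 0) →
          ‖x‖ < R →
          (∃ τ : Fin c ↪ Fin n,
            ρ ≤ |(Matrix.of fun j i =>
                    eval (fun i' => x i') (pderiv (τ i) (P j))).det|) →
          ∃ y : EuclideanSpace ℝ (Fin n),
            (∀ j, eval (fun i => y i) (P j) + α j = 0) ∧ ‖x - y‖ < ε := by
  intro ε hε
  classical
  set F : EuclideanSpace ℝ (Fin n) → EuclideanSpace ℝ (Fin c) :=
    fun y => (WithLp.equiv 2 (Fin c → ℝ)).symm (fun j => eval (fun i => y i) (P j)) with hF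
  have hcont : ∀ p : MvPolynomial (Fin n) ℝ,
      Continuous fun y : EuclideanSpace ℝ (Fin n) => eval (fun i => y i) p := fun p =>
    continuous_iff_continuousAt.2 fun x => (hasStrictFDerivAt_mvpoly_eval p x).continuousAt
  set K : Set (EuclideanSpace ℝ (Fin n)) :=
    {x | (∀ j, eval (fun i => x i) (P j) = 0) ∧ ‖x‖ ≤ R ∧
      ∃ τ : Fin c ↪ Fin n, ρ ≤ |(Matrix.of fun j i =>
        eval (fun i' => x i') (pderiv (τ i) (P j))).det|} with hK
  have hKcomp : IsCompact K := by
    refine Metric.isCompact_of_isClosed_isBounded ?_ ?_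
    · have hKeq : K = (⋂ j, {x : EuclideanSpace ℝ (Fin n) | eval (fun i => x i) (P j) = 0}) ∩
          (Metric.closedBall 0 R ∩
            ⋃ τ : Fin c ↪ Fin n, {x : EuclideanSpace ℝ (Fin n) |
              ρ ≤ |(Matrix.of fun j i => eval (fun i' => x i') (pderiv (τ i) (P j))).det|}) := by
        ext z
        simp only [hK, Set.mem_setOf_eq, Set.mem_inter_iff, Set.mem_iInter, Set.mem_iUnion,
          Metric.mem_closedBall, dist_zero_right]
      rw [hKeq]
      refine (isClosed_iInter fun j => isClosed_eq (hcont _) continuous_const).inter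
        (Metric.isClosed_closedBall.inter (isClosed_iUnion_of_finite fun τ => ?_))
      refine isClosed_le continuous_const (Continuous.abs (Continuous.matrix_det ?_))
      exact continuous_pi fun j => continuous_pi fun i => hcont _
    · refine (Metric.isBounded_closedBall (x := (0 : EuclideanSpace ℝ (Fin n))) (r := R)).subset ?_
      intro z hz
      obtain ⟨-, hz2, -⟩ := hz
      simpa [Metric.mem_closedBall, dist_zero_right] using hz2
  have key : ∀ xb ∈ K, ∃ δ : ℝ, 0 < δ ∧ ∀ α : EuclideanSpace ℝ (Fin c), ‖α‖ < δ →
      ∃ y ∈ Metric.ball xb (ε / 2), ∀ j, eval (fun i => y i) (P j) + α j = 0 := by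
    intro xb hxb
    obtain ⟨hzero, -, τ, hτ⟩ := hxb
    have hdet : (Matrix.of fun j i => eval (fun i' => xb i') (pderiv (τ i) (P j))).det ≠ 0 := by
      intro h0
      rw [h0] at hτ; simp only [abs_zero] at hτ; linarith
    have hmap := (hasStrictFDerivAt_mvpoly_F P xb).map_nhds_eq_of_surj
      (mvpoly_F_range_top P xb τ hdet)
    have hF0 : ((WithLp.equiv 2 (Fin c → ℝ)).symm fun j => eval (fun i => xb i) (P j))
        = (0 : EuclideanSpace ℝ (Fin c)) := by
      have h1 : (fun j => eval (fun i => xb i) (P j)) = (0 : Fin c → ℝ) :=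
        funext fun j => hzero j
      rw [h1, WithLp.equiv_symm_apply, WithLp.toLp_zero]
    rw [← hF] at hmap
    rw [hF0] at hmap
    have hball : F '' Metric.ball xb (ε / 2) ∈ nhds (0 : EuclideanSpace ℝ (Fin c)) := by
      rw [← hmap]
      exact Filter.image_mem_map (Metric.ball_mem_nhds _ (by linarith))
    obtain ⟨δ, hδpos, hsub⟩ := Metric.nhds_basis_ball.mem_iff.1 hball
    refine ⟨δ, hδpos, fun α hα => ?_⟩
    have hmem : -α ∈ Metric.ball (0 : EuclideanSpace ℝ (Fin c)) δ := by
      rw [Metric.mem_ball, dist_zero_right, norm_neg]; exact hα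
    obtain ⟨y, hy, hFy⟩ := hsub hmem
    refine ⟨y, hy, fun j => ?_⟩
    have hcomp : eval (fun i => y i) (P j) = -(α j) :=
      congrFun (congrArg (WithLp.equiv 2 (Fin c → ℝ)) hFy) j
    rw [hcomp]; ring
  choose! δf hδpos hδprop using key
  obtain ⟨t, htK, hcov⟩ := hKcomp.elim_nhds_subcover (fun z => Metric.ball z (ε / 2))
    (fun z _ => Metric.ball_mem_nhds _ (by linarith))
  by_cases ht : t.Nonempty
  · refine ⟨min 1 (t.inf' ht δf),
      lt_min one_pos ((Finset.lt_inf'_iff _).2 fun z hz => hδpos z (htK z hz)), ?_⟩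
    intro α hα x hx1 hx2 hx3
    have hxK : x ∈ K := ⟨hx1, le_of_lt hx2, hx3⟩
    obtain ⟨z, hzt, hxz⟩ := Set.mem_iUnion₂.1 (hcov hxK)
    have hαz : ‖α‖ < δf z :=
      lt_of_lt_of_le hα (le_trans (min_le_right _ _) (Finset.inf'_le _ hzt))
    obtain ⟨y, hy, hyeq⟩ := hδprop z (htK z hzt) α hαz
    refine ⟨y, hyeq, ?_⟩
    have h1 : dist x z < ε / 2 := Metric.mem_ball.1 hxz
    have h2 : dist z y < ε / 2 := by rw [dist_comm]; exact Metric.mem_ball.1 hy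
    calc ‖x - y‖ = dist x y := (dist_eq_norm x y).symm
      _ ≤ dist x z + dist z y := dist_triangle _ _ _
      _ < ε := by linarith
  · refine ⟨1, one_pos, ?_⟩
    intro α hα x hx1 hx2 hx3
    exact absurd (hcov ⟨hx1, le_of_lt hx2, hx3⟩)
      (by simp [Finset.not_nonempty_iff_eq_empty.1 ht])
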